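/- Let (V,Q) be a finite-dimensional real symplectic vector space and γ ∈ V with γ ≠ 0. In V ⊕ V with the symplectic form Q ⊕ −Q, let A = graph(T_γ), B = graph(id) (the diagonal), and let C be any Lagrangian subspace of V ⊕ V. Then Wall's space W = (B ∩ (C + A)) / ((B ∩ C) + (B ∩ A)) has dimension at most 1. -/
import Mathlib


/-- The symplectic transvection along `γ`: `v ↦ v + Q(γ,v)·γ`. -/
def symplTransvection {V : Type*} [AddCommGroup V] [Module ℝ V]
    (Q : V →ₗ[ℝ] V →ₗ[ℝ] ℝ) (γ : V) : V →ₗ[ℝ] V :=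
  LinearMap.id + (Q γ).smulRight γ

/-- For γ ≠ 0, A = graph(T_γ), B = graph(id) (the diagonal) in V ⊕ V with
the form Q ⊕ −Q, and C any Lagrangian subspace of V ⊕ V, Wall's space
W = (B ∩ (C + A)) / ((B ∩ C) + (B ∩ A)) has dimension at most 1. -/
theorem stmt_17 {V : Type*} [AddCommGroup V] [Module ℝ V] [FiniteDimensional ℝ V]
    (Q : V →ₗ[ℝ] V →ₗ[ℝ] ℝ)
    (hAlt : ∀ x, Q x x = 0)
    (hNd : ∀ x, (∀ y, Q x y = 0) → x = 0)
    (γ : V) (hγ : γ ≠ 0)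
    (C : Submodule ℝ (V × V))
    (hCiso : ∀ p ∈ C, ∀ q ∈ C, Q p.1 q.1 - Q p.2 q.2 = 0)
    (hCdim : 2 * Module.finrank ℝ ↥C = Module.finrank ℝ (V × V)) :
    Module.finrank ℝ
      (↥(LinearMap.graph (LinearMap.id : V →ₗ[ℝ] V) ⊓
          (C ⊔ LinearMap.graph (symplTransvection Q γ))) ⧸
        Submodule.comap
          (LinearMap.graph (LinearMap.id : V →ₗ[ℝ] V) ⊓
            (C ⊔ LinearMap.graph (symplTransvection Q γ))).subtype
          ((LinearMap.graph (LinearMap.id : V →ₗ[ℝ] V) ⊓ C) ⊔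
            (LinearMap.graph (LinearMap.id : V →ₗ[ℝ] V) ⊓
              LinearMap.graph (symplTransvection Q γ)))) ≤ 1 := by
  set A := LinearMap.graph (symplTransvection Q γ) with hA
  set B := LinearMap.graph (LinearMap.id : V →ₗ[ℝ] V) with hB
  set S := B ⊓ (C ⊔ A) with hS
  set N := Submodule.comap S.subtype ((B ⊓ C) ⊔ (B ⊓ A)) with hN
  -- the functional p ↦ Q γ p.1 on S
  let g : ↥S →ₗ[ℝ] ℝ := (Q γ).comp ((LinearMap.fst ℝ V V).comp S.subtype)
  have hker : LinearMap.ker g ≤ N := by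
    rintro ⟨p, hp⟩ hgp
    have hpB : p ∈ B := hp.1
    have hgp' : Q γ p.1 = 0 := hgp
    have hp2 : p.2 = p.1 := by
      simpa using (LinearMap.mem_graph_iff (LinearMap.id : V →ₗ[ℝ] V) p).mp hpB
    have hpA : p ∈ A := by
      rw [hA]; rw [LinearMap.mem_graph_iff]
      simp [symplTransvection, hgp', hp2]
    exact Submodule.mem_comap.mpr
      (Submodule.mem_sup_right (Submodule.mem_inf.mpr ⟨hpB, hpA⟩))
  have hker' : LinearMap.ker g ≤ Submodule.comap (LinearMap.id : ↥S →ₗ[ℝ] ↥S) N :=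
    fun x hx => hker hx
  let π := Submodule.mapQ (LinearMap.ker g) N LinearMap.id hker'
  have hsurj : Function.Surjective π := by
    intro y
    obtain ⟨x, rfl⟩ := Submodule.Quotient.mk_surjective N y
    exact ⟨Submodule.Quotient.mk x, by simp [π, Submodule.mapQ_apply]⟩
  have h1 : Module.finrank ℝ (↥S ⧸ N) ≤ Module.finrank ℝ (↥S ⧸ LinearMap.ker g) := by
    have := LinearMap.finrank_range_le π
    rwa [LinearMap.range_eq_top.mpr hsurj, finrank_top] at this
  have h2 : Module.finrank ℝ (↥S ⧸ LinearMap.ker g)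
      = Module.finrank ℝ ↥(LinearMap.range g) :=
    (g.quotKerEquivRange).finrank_eq
  have h3 : Module.finrank ℝ ↥(LinearMap.range g) ≤ 1 := by
    have := Submodule.finrank_le (LinearMap.range g)
    simpa using this
  calc Module.finrank ℝ (↥S ⧸ N) ≤ _ := h1
    _ = _ := h2
    _ ≤ 1 := h3
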